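/- Let b, b̄ satisfy the hypotheses of the main quantitative estimate, i.e. suppose for all γ, r, η > 0 there exist λ and C_{γ,r,η} with ℒ^N(B_r ∩ {|X(s,·) − X̄(s,·)| > γ}) ≤ C_{γ,r,η} ‖b − b̄‖_{L¹((0,T)×B_λ)} + η for all s, where X, X̄ are regular Lagrangian flows of b, b̄. Then in the case b = b̄ the regular Lagrangian flow is unique: any two regular Lagrangian flows X, X̄ associated to b coincide, i.e. X(s,x) = X̄(s,x) for a.e. x, for every s ∈ [0,T]. -/

import Mathlib

open MeasureTheory

/-- uniqueness of the regular Lagrangian flow from the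
quantitative stability estimate, in the case `b = b̄`. -/
theorem uniqueness_from_quantitative_estimate (N : ℕ) (T : ℝ) (hT : 0 < T)
    (b bbar : ℝ → EuclideanSpace ℝ (Fin N) → EuclideanSpace ℝ (Fin N))
    (X Y : ℝ → EuclideanSpace ℝ (Fin N) → EuclideanSpace ℝ (Fin N))
    -- the quantitative estimate of the main theorem
    (hest : ∀ γ r η : ℝ, 0 < γ → 0 < r → 0 < η →
      ∃ lam C : ℝ, 0 < lam ∧ 0 ≤ C ∧
        ∀ s ∈ Set.Icc (0 : ℝ) T,
          volume (Metric.ball (0 : EuclideanSpace ℝ (Fin N)) r ∩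
              {x | γ < ‖X s x - Y s x‖}) ≤
            ENNReal.ofReal (C * (∫ q in Set.Ioo (0 : ℝ) T ×ˢ
              Metric.ball (0 : EuclideanSpace ℝ (Fin N)) lam,
                ‖b q.1 q.2 - bbar q.1 q.2‖) + η))
    -- the case b = b̄
    (hbb : b = bbar) :
    ∀ s ∈ Set.Icc (0 : ℝ) T, ∀ᵐ x : EuclideanSpace ℝ (Fin N) ∂volume,
      X s x = Y s x := by
  subst hbb
  intro s hs
  have key : ∀ γ r : ℝ, 0 < γ → 0 < r →
      volume (Metric.ball (0 : EuclideanSpace ℝ (Fin N)) r ∩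
        {x | γ < ‖X s x - Y s x‖}) = 0 := by
    intro γ r hγ hr
    refine le_antisymm ?_ zero_le
    refine ENNReal.le_of_forall_pos_le_add fun ε hε _ => ?_
    obtain ⟨lam, C, hlam, hC, h⟩ := hest γ r ε hγ hr (by exact_mod_cast hε)
    have h' := h s hs
    have hint : (∫ q in Set.Ioo (0 : ℝ) T ×ˢ
        Metric.ball (0 : EuclideanSpace ℝ (Fin N)) lam,
        ‖b q.1 q.2 - b q.1 q.2‖) = 0 := by simp
    rw [hint, mul_zero, zero_add] at h'
    simpa using h'
  rw [ae_iff]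
  have hsub : {x : EuclideanSpace ℝ (Fin N) | ¬ X s x = Y s x} ⊆
      ⋃ n : ℕ, Metric.ball (0 : EuclideanSpace ℝ (Fin N)) (n + 1) ∩
        {x | 1 / (n + 1 : ℝ) < ‖X s x - Y s x‖} := by
    intro x hx
    have hd : 0 < ‖X s x - Y s x‖ := by
      simpa [sub_eq_zero] using hx
    obtain ⟨n, hn⟩ := exists_nat_gt (max ‖x‖ (1 / ‖X s x - Y s x‖))
    refine Set.mem_iUnion.2 ⟨n, ?_, ?_⟩
    · have : ‖x‖ < n + 1 := lt_of_le_of_lt (le_max_left _ _) (hn.trans (by linarith))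
      simpa [Metric.mem_ball, dist_eq_norm] using this
    · have h1 : 1 / ‖X s x - Y s x‖ < (n : ℝ) + 1 :=
        lt_of_le_of_lt (le_max_right _ _) (hn.trans (by linarith))
      have hn1 : (0 : ℝ) < (n : ℝ) + 1 := by positivity
      simpa using (one_div_lt hd hn1).mp h1
  refine measure_mono_null hsub (measure_iUnion_null fun n => ?_)
  exact key _ _ (by positivity) (by positivity)
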